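/- The coefficient of ds₁∧ds₂ in the twisted coboundary ∇(−s₁ds₂/(s₂L)) equals (λ₄−1)x₁s₁/(s₂L²) − [(λ₁+λ₃+1)/(s₂L) + λ₃/(QL)], as a rational function identity; here ∇η = d_sη + ω∧η with ω = λ₁ds₁/s₁ + λ₂ds₂/s₂ + λ₃dQ/Q + λ₄dL/L, Q = s₁s₂−s₁−s₂, L = 1−s₁x₁−s₂x₂. -/

import Mathlib

lemma h1aux (l₁ s₁ s₂ L : ℂ) (hs₁ : s₁ ≠ 0) :
    l₁ / s₁ * s₁ / (s₂ * L) = l₁ / (s₂ * L) := by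
  rw [div_mul_cancel₀ _ hs₁]

lemma h2aux (l₃ s₁ s₂ L : ℂ) (hs₂ : s₂ ≠ 0) (hL : L ≠ 0)
    (hQ : s₁ * s₂ - s₁ - s₂ ≠ 0) :
    l₃ * (s₂ - 1) / (s₁ * s₂ - s₁ - s₂) * s₁ / (s₂ * L)
      = l₃ / (s₂ * L) + l₃ / ((s₁ * s₂ - s₁ - s₂) * L) := by
  rw [div_add_div _ _ (mul_ne_zero hs₂ hL) (mul_ne_zero hQ hL), div_mul_eq_mul_div, div_div, div_eq_div_iff (mul_ne_zero hQ (mul_ne_zero hs₂ hL)) (mul_ne_zero (mul_ne_zero hs₂ hL) (mul_ne_zero hQ hL))]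
  ring

lemma h3aux (l₄ x₁ s₁ s₂ L : ℂ) (hs₂ : s₂ ≠ 0) (hL : L ≠ 0) :
    l₄ * x₁ / L * s₁ / (s₂ * L) = l₄ * x₁ * s₁ / (s₂ * L ^ 2) := by
  field_simp

lemma twisted_aux (l₁ l₃ l₄ x₁ x₂ s₁ s₂ : ℂ)
    (hs₁ : s₁ ≠ 0) (hs₂ : s₂ ≠ 0)
    (hQ : s₁ * s₂ - s₁ - s₂ ≠ 0) (hL : 1 - s₁ * x₁ - s₂ * x₂ ≠ 0) :
    -(1 / (s₂ * (1 - s₁ * x₁ - s₂ * x₂)) + s₁ * x₁ / (s₂ * (1 - s₁ * x₁ - s₂ * x₂) ^ 2))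
      - (l₁ / s₁ + l₃ * (s₂ - 1) / (s₁ * s₂ - s₁ - s₂) - l₄ * x₁ / (1 - s₁ * x₁ - s₂ * x₂)) * s₁ / (s₂ * (1 - s₁ * x₁ - s₂ * x₂))
    = (l₄ - 1) * x₁ * s₁ / (s₂ * (1 - s₁ * x₁ - s₂ * x₂) ^ 2)
      - ((l₁ + l₃ + 1) / (s₂ * (1 - s₁ * x₁ - s₂ * x₂)) + l₃ / ((s₁ * s₂ - s₁ - s₂) * (1 - s₁ * x₁ - s₂ * x₂))) := by
  have h1 := h1aux l₁ s₁ s₂ (1 - s₁ * x₁ - s₂ * x₂) hs₁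
  have h2 := h2aux l₃ s₁ s₂ (1 - s₁ * x₁ - s₂ * x₂) hs₂ hL hQ
  have h3 := h3aux l₄ x₁ s₁ s₂ (1 - s₁ * x₁ - s₂ * x₂) hs₂ hL
  linear_combination -h1 - h2 + h3

/-- The coefficient of `ds₁∧ds₂` in `∇(-s₁ds₂/(s₂L))`.
Writing `ω = A ds₁ + B ds₂` with `A = l₁/s₁ + l₃(s₂-1)/Q - l₄x₁/L`, the
coefficient of `ds₁∧ds₂` in `d_s(-s₁/(s₂L) ds₂) + ω∧(-s₁/(s₂L) ds₂)` equals
`-∂/∂s₁(s₁/(s₂L)) - A·s₁/(s₂L) = -(1/(s₂L) + s₁x₁/(s₂L²)) - A s₁/(s₂L)`,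
and this equals `(l₄-1)x₁s₁/(s₂L²) - (l₁+l₃+1)/(s₂L) - l₃/(QL)`. -/
theorem twisted_coboundary_s1ds2 (l₁ l₂ l₃ l₄ x₁ x₂ s₁ s₂ : ℂ)
    (hs₁ : s₁ ≠ 0) (hs₂ : s₂ ≠ 0)
    (hQ : s₁ * s₂ - s₁ - s₂ ≠ 0) (hL : 1 - s₁ * x₁ - s₂ * x₂ ≠ 0) :
    let Q := s₁ * s₂ - s₁ - s₂;
    let L := 1 - s₁ * x₁ - s₂ * x₂;
    -(1 / (s₂ * L) + s₁ * x₁ / (s₂ * L ^ 2))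
      - (l₁ / s₁ + l₃ * (s₂ - 1) / Q - l₄ * x₁ / L) * s₁ / (s₂ * L)
    = (l₄ - 1) * x₁ * s₁ / (s₂ * L ^ 2)
      - ((l₁ + l₃ + 1) / (s₂ * L) + l₃ / (Q * L)) := by
  exact twisted_aux l₁ l₃ l₄ x₁ x₂ s₁ s₂ hs₁ hs₂ hQ hL
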